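/- Let H and K be n×n real symmetric matrices with n ≥ 3, where K is positive definite and H is positive semidefinite. If H + K ≥ I (i.e., H + K - I is positive semidefinite) and trace(H) = 1, then det(H)^{1/2} / det(K) ≤ n^{n/2} / (n-1)^n. -/

import Mathlib

open Finset Matrix

section BCGaux

variable {n : ℕ}

noncomputable def bcgPhi (x : ℝ) : ℝ := Real.log x / 2 - Real.log (1 - x)

lemma bcg_hasDeriv (m : ℝ) {x : ℝ} (h0 : 0 < x) (h1 : x < 1) :
    HasDerivAt (fun y => bcgPhi y - m * y) (1/(2*x) + 1/(1-x) - m) x := by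
  have h1' : (1:ℝ) - x ≠ 0 := by linarith
  have hlog : HasDerivAt (fun y : ℝ => Real.log y) x⁻¹ x := Real.hasDerivAt_log h0.ne'
  have hsub : HasDerivAt (fun y : ℝ => 1 - y) (-1) x := by
    simpa using (hasDerivAt_id x).const_sub 1
  have hlog2 : HasDerivAt (fun y : ℝ => Real.log (1 - y)) (-1 / (1 - x)) x := hsub.log h1'
  have h := ((hlog.div_const 2).sub hlog2).sub ((hasDerivAt_id x).const_mul m)
  have : HasDerivAt (fun y => bcgPhi y - m * y) (x⁻¹/2 - (-1/(1-x)) - m*1) x := by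
    simpa [bcgPhi, mul_comm, Pi.sub_def] using h
  convert this using 1
  field_simp
  ring

lemma bcg_tangent {N x : ℝ} (hN : 3 ≤ N) (hx : 0 < x) (hx2 : x ≤ 1/2) :
    bcgPhi x ≤ bcgPhi (1/N) + (N/2 + N/(N-1)) * (x - 1/N) := by
  have hN0 : (0:ℝ) < N := by linarith
  have hN1 : (0:ℝ) < N - 1 := by linarith
  set m : ℝ := N/2 + N/(N-1) with hm_def
  set f : ℝ → ℝ := fun y => bcgPhi y - m * y with hf_def
  have key : ∀ y : ℝ, 0 < y → y < 1 → m * (2*y*(1-y)) * (N-1) = (N^2+N)*(y*(1-y)) := by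
    intro y _ _
    rw [hm_def]; field_simp; ring
  suffices h : f x ≤ f (1/N) by
    simp only [hf_def] at h
    linarith
  have hNinv0 : 0 < 1/N := by positivity
  have hNinv : 1/N ≤ 1/3 := by
    rw [div_le_div_iff₀ hN0 (by norm_num)]; linarith
  rcases le_total x (1/N) with hc | hc
  · have hmono : MonotoneOn f (Set.Icc x (1/N)) := by
      have hmem : ∀ y ∈ Set.Icc x (1/N), 0 < y ∧ y < 1 := by
        rintro y ⟨h1, h2⟩
        exact ⟨lt_of_lt_of_le hx h1, by linarith [le_trans h2 hNinv]⟩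
      apply monotoneOn_of_deriv_nonneg (convex_Icc _ _)
      · intro y hy
        exact (bcg_hasDeriv m (hmem y hy).1 (hmem y hy).2).continuousAt.continuousWithinAt
      · intro y hy
        have hy' := interior_subset hy
        exact (bcg_hasDeriv m (hmem y hy').1 (hmem y hy').2).differentiableAt.differentiableWithinAt
      · intro y hy
        rw [interior_Icc] at hy
        obtain ⟨hy1, hy2⟩ := hy
        have hy0 : 0 < y := lt_trans hx hy1
        have hylt : y < 1 := by linarith [lt_of_lt_of_le hy2 hNinv]
        rw [(bcg_hasDeriv m hy0 hylt).deriv]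
        -- need 0 ≤ 1/(2y) + 1/(1-y) - m
        have h2y : (0:ℝ) < 2*y := by linarith
        have h1y : (0:ℝ) < 1 - y := by linarith
        have hprod : 0 ≤ (N*y - 1) * ((N+1)*y - (N-1)) := by
          have ha : N*y - 1 ≤ 0 := by
            have : y ≤ 1/N := hy2.le
            rw [le_div_iff₀ hN0] at this
            linarith
          have hb : (N+1)*y - (N-1) ≤ 0 := by nlinarith [le_trans hy2.le hNinv]
          nlinarith [ha, hb]
        have hkey := key y hy0 hylt
        have goal2 : m * (2*y*(1-y)) ≤ 1 + y := by
          rw [← mul_le_mul_iff_of_pos_right hN1]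
          nlinarith [hprod, hkey]
        have hexp : 1/(2*y) + 1/(1-y) = (1+y)/(2*y*(1-y)) := by
          field_simp; ring
        rw [sub_nonneg, hexp, le_div_iff₀ (by positivity)]
        linarith [goal2]
    exact hmono (Set.mem_Icc.mpr ⟨le_refl x, hc⟩) (Set.mem_Icc.mpr ⟨hc, le_refl _⟩) hc
  · have hanti : AntitoneOn f (Set.Icc (1/N) x) := by
      have hmem : ∀ y ∈ Set.Icc (1/N) x, 0 < y ∧ y < 1 := by
        rintro y ⟨h1, h2⟩
        exact ⟨lt_of_lt_of_le hNinv0 h1, by linarith [le_trans h2 hx2]⟩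
      apply antitoneOn_of_deriv_nonpos (convex_Icc _ _)
      · intro y hy
        exact (bcg_hasDeriv m (hmem y hy).1 (hmem y hy).2).continuousAt.continuousWithinAt
      · intro y hy
        have hy' := interior_subset hy
        exact (bcg_hasDeriv m (hmem y hy').1 (hmem y hy').2).differentiableAt.differentiableWithinAt
      · intro y hy
        rw [interior_Icc] at hy
        obtain ⟨hy1, hy2⟩ := hy
        have hy0 : 0 < y := lt_trans hNinv0 hy1
        have hyh : y ≤ 1/2 := le_trans hy2.le hx2
        have hylt : y < 1 := by linarith
        rw [(bcg_hasDeriv m hy0 hylt).deriv]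
        have h2y : (0:ℝ) < 2*y := by linarith
        have h1y : (0:ℝ) < 1 - y := by linarith
        have hprod : (N*y - 1) * ((N+1)*y - (N-1)) ≤ 0 := by
          apply mul_nonpos_of_nonneg_of_nonpos
          · have : 1/N ≤ y := hy1.le
            rw [div_le_iff₀ hN0] at this
            linarith
          · nlinarith [hyh]
        have hkey := key y hy0 hylt
        have goal2 : 1 + y ≤ m * (2*y*(1-y)) := by
          rw [← mul_le_mul_iff_of_pos_right hN1]
          nlinarith [hprod, hkey]
        have hexp : 1/(2*y) + 1/(1-y) = (1+y)/(2*y*(1-y)) := by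
          field_simp; ring
        rw [sub_nonpos, hexp, div_le_iff₀ (by positivity)]
        linarith [goal2]
    exact hanti (Set.mem_Icc.mpr ⟨le_refl _, hc⟩) (Set.mem_Icc.mpr ⟨hc, le_refl _⟩) hc

lemma bcg_chord {s x : ℝ} (hs0 : 0 < s) (hs1 : s < 1) (hx0 : 0 ≤ x) (hxs : x ≤ s) :
    -Real.log (1-x) ≤ (x/s) * (-Real.log (1-s)) := by
  have hcc : ConcaveOn ℝ (Set.Ioi 0) Real.log := strictConcaveOn_log_Ioi.concaveOn
  have hmem1 : (1-s : ℝ) ∈ Set.Ioi (0:ℝ) := by simp; linarith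
  have hmem2 : (1:ℝ) ∈ Set.Ioi (0:ℝ) := by simp
  have ha : 0 ≤ x/s := by positivity
  have hb : 0 ≤ 1 - x/s := by
    have : x/s ≤ 1 := by rw [div_le_one hs0]; exact hxs
    linarith
  have hab : x/s + (1 - x/s) = 1 := by ring
  have h := hcc.2 hmem1 hmem2 ha hb hab
  have harg : (x/s) • (1-s) + (1 - x/s) • (1:ℝ) = 1 - x := by
    have hs0' : s ≠ 0 := hs0.ne'
    simp only [smul_eq_mul]
    field_simp
    ring
  rw [harg] at h
  simp only [smul_eq_mul, Real.log_one, mul_zero, add_zero] at h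
  linarith

lemma bcg_amgm {ι : Type*} (e : Finset ι) (he : e.Nonempty) (g : ι → ℝ)
    (hg : ∀ j ∈ e, 0 < g j) :
    ∑ j ∈ e, Real.log (g j) ≤ (e.card : ℝ) * Real.log ((∑ j ∈ e, g j) / e.card) := by
  have hc : (0:ℝ) < e.card := by exact_mod_cast Finset.card_pos.mpr he
  have hw : ∀ j ∈ e, (0:ℝ) ≤ 1 / e.card := fun j _ => by positivity
  have hw' : ∑ _j ∈ e, (1:ℝ) / e.card = 1 := by
    rw [Finset.sum_const, nsmul_eq_mul]
    field_simp
  have hgm := Real.geom_mean_le_arith_mean_weighted e (fun _ => 1 / e.card) g hw hw'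
    (fun j hj => (hg j hj).le)
  have hppos : 0 < ∏ j ∈ e, g j ^ ((1:ℝ) / e.card) := by
    apply Finset.prod_pos
    intro j hj
    exact Real.rpow_pos_of_pos (hg j hj) _
  have hlog := Real.log_le_log hppos hgm
  rw [Real.log_prod (fun j hj => (Real.rpow_pos_of_pos (hg j hj) _).ne')] at hlog
  rw [Finset.sum_congr rfl (fun j hj => Real.log_rpow (hg j hj) ((1:ℝ)/e.card))] at hlog
  rw [← Finset.mul_sum] at hlog
  have hsum' : ∑ j ∈ e, (1:ℝ)/(e.card:ℝ) * g j = (∑ j ∈ e, g j) / e.card := by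
    rw [← Finset.mul_sum]
    ring
  rw [hsum'] at hlog
  calc ∑ j ∈ e, Real.log (g j) = (e.card : ℝ) * ((1:ℝ)/(e.card:ℝ) * ∑ j ∈ e, Real.log (g j)) := by
        field_simp
    _ ≤ (e.card : ℝ) * Real.log ((∑ j ∈ e, g j) / e.card) := by
        apply mul_le_mul_of_nonneg_left hlog hc.le

lemma bcg_star (n : ℕ) (h : 4 ≤ n) :
    (4 - (n:ℝ)) * Real.log 2 + ((n:ℝ)+1) * Real.log ((n:ℝ)-1) ≤ (n:ℝ) * Real.log (n:ℝ) := by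
  rcases eq_or_lt_of_le h with h4 | h5
  · subst h4
    push_cast
    norm_num
    have : (5:ℝ) * Real.log 3 ≤ 4 * Real.log 4 := by
      rw [show (5:ℝ) * Real.log 3 = Real.log (3^5) by rw [Real.log_pow]; push_cast; ring,
          show (4:ℝ) * Real.log 4 = Real.log (4^4) by rw [Real.log_pow]; push_cast; ring]
      exact Real.log_le_log (by positivity) (by norm_num)
    linarith
  · have hn5 : (5:ℝ) ≤ (n:ℝ) := by exact_mod_cast h5
    set N := (n:ℝ) with hN
    have hN1 : (0:ℝ) < N - 1 := by linarith
    have hN0 : (0:ℝ) < N := by linarith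
    have L1 : Real.log (N-1) ≤ 2 * Real.log 2 + (N-5)/4 := by
      have h0 := Real.log_le_sub_one_of_pos (show (0:ℝ) < (N-1)/4 by linarith)
      rw [Real.log_div (by linarith) (by norm_num)] at h0
      have l4 : Real.log 4 = 2 * Real.log 2 := by
        rw [show (4:ℝ) = 2^2 by norm_num, Real.log_pow]
        push_cast; ring
      linarith
    have L2 : N * Real.log (N-1) + 1 ≤ N * Real.log N := by
      have h0 := Real.log_le_sub_one_of_pos (show (0:ℝ) < (N-1)/N by positivity)
      rw [Real.log_div (by linarith) hN0.ne'] at h0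
      have : (N-1)/N - 1 = -(1/N) := by field_simp; ring
      rw [this] at h0
      have h1 : Real.log (N-1) + 1/N ≤ Real.log N := by linarith
      have h2 := mul_le_mul_of_nonneg_left h1 hN0.le
      have : N * (1/N) = 1 := by field_simp
      nlinarith [h2]
    have l2lt : Real.log 2 < 0.6931472 := by
      have := Real.log_two_lt_d9; linarith
    have l2gt : (0.25:ℝ) < Real.log 2 := by
      have := Real.log_two_gt_d9; linarith
    have h1 : (4-N) * Real.log 2 + Real.log (N-1) ≤ 1 := by
      have h0 : 0 ≤ (N-5) * (Real.log 2 - 1/4) := by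
        apply mul_nonneg <;> linarith
      nlinarith [L1]
    linarith [h1, L2]

set_option maxHeartbeats 1000000 in
lemma bcg_key3 (lam : Fin 3 → ℝ) (hpos : ∀ i, 0 < lam i) (hsum : ∑ i, lam i = 1)
    (k : Fin 3) (hk : 1/2 < lam k) :
    ∑ i, bcgPhi (lam i) ≤ (3:ℝ)/2 * Real.log 3 - 3 * Real.log 2 := by
  classical
  set e := Finset.univ.erase k with he_def
  have hecard : e.card = 2 := by
    rw [he_def, Finset.card_erase_of_mem (Finset.mem_univ k)]
    simp
  obtain ⟨a, b, hab, habe⟩ := Finset.card_eq_two.mp hecard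
  have hsplit : ∑ i, bcgPhi (lam i) = bcgPhi (lam k) + (bcgPhi (lam a) + bcgPhi (lam b)) := by
    rw [← Finset.add_sum_erase _ _ (Finset.mem_univ k), ← he_def, habe, Finset.sum_pair hab]
  have hsum' : lam k + (lam a + lam b) = 1 := by
    rw [← Finset.sum_pair hab, ← habe, he_def, Finset.add_sum_erase _ _ (Finset.mem_univ k), hsum]
  set t := lam k with ht_def
  set A := lam a with hA_def
  set B := lam b with hB_def
  have hA0 : 0 < A := hpos a
  have hB0 : 0 < B := hpos b
  have ht0 : 0 < t := hpos k
  set s : ℝ := A + B with hs_def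
  have hs0 : 0 < s := by positivity
  have hts : t + s = 1 := hsum'
  have hs12 : s < 1/2 := by linarith
  have hA1 : A < 1/2 := by linarith
  have hB1 : B < 1/2 := by linarith
  set P : ℝ := A * B with hP_def
  have hP0 : 0 < P := by positivity
  have hPs : P ≤ s^2/4 := by nlinarith [sq_nonneg (A - B)]
  have hfactor : (1 - A) * (1 - B) = t + P := by
    have : t = 1 - A - B := by linarith
    rw [this, hP_def]; ring
  -- φ A + φ B = log P / 2 - log (t + P)
  have hAB : bcgPhi A + bcgPhi B = Real.log P / 2 - Real.log (t + P) := by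
    rw [bcgPhi, bcgPhi, hP_def, Real.log_mul hA0.ne' hB0.ne', ← hfactor,
      Real.log_mul (ne_of_gt (show (0:ℝ) < 1 - A by linarith))
        (ne_of_gt (show (0:ℝ) < 1 - B by linarith))]
    ring
  clear_value t A B s P
  -- monotone step: log P / 2 - log (t+P) ≤ log (s²/4) / 2 - log (t + s²/4)
  have hstep : Real.log P / 2 - Real.log (t + P) ≤
      Real.log (s^2/4) / 2 - Real.log (t + s^2/4) := by
    have hv0 : 0 < s^2/4 := by positivity
    have hs116 : s^2/4 ≤ 1/16 := by nlinarith [hs12, hs0]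
    have hP16 : P ≤ 1/16 := hPs.trans hs116
    have huv : P * (s^2/4) ≤ 1/256 := by
      have := mul_le_mul hP16 hs116 hv0.le (by norm_num)
      linarith
    have hineq : P * (t + s^2/4)^2 ≤ (s^2/4) * (t + P)^2 := by
      have hfac : (s^2/4) * (t + P)^2 - P * (t + s^2/4)^2
          = (s^2/4 - P) * (t^2 - P*(s^2/4)) := by ring
      have h2 : 0 ≤ (s^2/4 - P) * (t^2 - P*(s^2/4)) := by
        apply mul_nonneg (by linarith)
        nlinarith [hk, huv]
      linarith
    have hlog := Real.log_le_log (by positivity) hineq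
    rw [Real.log_mul hP0.ne' (by positivity), Real.log_mul hv0.ne' (by positivity),
      Real.log_pow, Real.log_pow] at hlog
    push_cast at hlog
    linarith
  have hqs : t + s^2/4 = (1+t)^2/4 := by
    have : s = 1 - t := by linarith
    rw [this]; ring
  -- assemble
  have hphit : bcgPhi t = Real.log t / 2 - Real.log s := by
    rw [bcgPhi]
    congr 2
    linarith
  have hlogs2 : Real.log (s^2/4) = 2 * Real.log s - 2 * Real.log 2 := by
    rw [show s^2/4 = (s/2)^2 by ring, Real.log_pow, Real.log_div hs0.ne' (by norm_num)]
    push_cast; ring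
  have hlogq : Real.log ((1+t)^2/4) = 2 * Real.log (1+t) - 2 * Real.log 2 := by
    rw [show (1+t)^2/4 = ((1+t)/2)^2 by ring, Real.log_pow,
      Real.log_div (ne_of_gt (show (0:ℝ) < 1 + t by linarith)) (by norm_num)]
    push_cast; ring
  -- final scalar inequality: log t / 2 + log 2 - 2 log(1+t) ≤ 3/2 log 3 - 3 log 2
  have hfin : Real.log t / 2 + Real.log 2 - 2 * Real.log (1+t) ≤
      (3:ℝ)/2 * Real.log 3 - 3 * Real.log 2 := by
    have hpoly : 256 * t ≤ 27 * (1+t)^4 := by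
      have hid : 27*(1+t)^4 - 256*t = (3*t-1)^2 * (3*t^2+14*t+27) := by ring
      have hnn : 0 ≤ (3*t-1)^2 * (3*t^2+14*t+27) :=
        mul_nonneg (sq_nonneg _) (by nlinarith [sq_nonneg (3*t+7)])
      linarith
    have l256 : Real.log 256 = 8 * Real.log 2 := by
      rw [show (256:ℝ) = 2^8 by norm_num, Real.log_pow]; push_cast; ring
    have l27 : Real.log 27 = 3 * Real.log 3 := by
      rw [show (27:ℝ) = 3^3 by norm_num, Real.log_pow]; push_cast; ring
    have hlog := Real.log_le_log (by positivity) hpoly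
    rw [Real.log_mul (by norm_num) ht0.ne', Real.log_mul (by norm_num) (by positivity),
      Real.log_pow, l256, l27] at hlog
    push_cast at hlog
    linarith
  rw [hsplit, hAB, hphit]
  calc Real.log t / 2 - Real.log s + (Real.log P / 2 - Real.log (t + P))
      ≤ Real.log t / 2 - Real.log s + (Real.log (s^2/4) / 2 - Real.log (t + s^2/4)) := by
        linarith [hstep]
    _ = Real.log t / 2 + Real.log 2 - 2 * Real.log (1+t) := by
        rw [hqs, hlogs2, hlogq]; ring
    _ ≤ (3:ℝ)/2 * Real.log 3 - 3 * Real.log 2 := hfin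

lemma bcg_key (n : ℕ) (hn : 3 ≤ n) (lam : Fin n → ℝ) (hpos : ∀ i, 0 < lam i)
    (hsum : ∑ i, lam i = 1) :
    ∑ i, bcgPhi (lam i) ≤ (n:ℝ)/2 * Real.log n - (n:ℝ) * Real.log ((n:ℝ)-1) := by
  have hN3 : (3:ℝ) ≤ (n:ℝ) := by exact_mod_cast hn
  have hN0 : (0:ℝ) < (n:ℝ) := by linarith
  have hN1 : (0:ℝ) < (n:ℝ) - 1 := by linarith
  by_cases hbig : ∀ i, lam i ≤ 1/2
  · have hval : bcgPhi (1/(n:ℝ)) = Real.log n / 2 - Real.log ((n:ℝ)-1) := by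
      rw [bcgPhi, one_div, Real.log_inv,
        show (1:ℝ) - ((n:ℝ))⁻¹ = ((n:ℝ)-1)/(n:ℝ) by field_simp,
        Real.log_div hN1.ne' hN0.ne']
      ring
    calc ∑ i, bcgPhi (lam i)
        ≤ ∑ _i : Fin n, (bcgPhi (1/(n:ℝ))
            + ((n:ℝ)/2 + (n:ℝ)/((n:ℝ)-1)) * (lam _i - 1/(n:ℝ))) :=
          Finset.sum_le_sum (fun i _ => bcg_tangent hN3 (hpos i) (hbig i))
      _ = (n:ℝ) * bcgPhi (1/(n:ℝ)) + ((n:ℝ)/2 + (n:ℝ)/((n:ℝ)-1))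
            * ((∑ i, lam i) - (n:ℝ) * (1/(n:ℝ))) := by
          rw [Finset.sum_add_distrib, Finset.sum_const, Finset.card_univ, Fintype.card_fin,
            ← Finset.mul_sum, Finset.sum_sub_distrib, Finset.sum_const, Finset.card_univ,
            Fintype.card_fin]
          push_cast
          ring
      _ = (n:ℝ) * bcgPhi (1/(n:ℝ)) := by
          rw [hsum, mul_one_div, div_self hN0.ne']
          ring
      _ = (n:ℝ)/2 * Real.log n - (n:ℝ) * Real.log ((n:ℝ)-1) := by rw [hval]; ring
  · push_neg at hbig
    obtain ⟨k, hk⟩ := hbig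
    rcases eq_or_lt_of_le hn with h3 | h4
    · subst h3
      have h := bcg_key3 lam hpos hsum k hk
      push_cast
      norm_num
      linarith [h]
    · have h4' : 4 ≤ n := by omega
      set e := Finset.univ.erase k with he_def
      have hk_mem : k ∈ (Finset.univ : Finset (Fin n)) := Finset.mem_univ k
      have hecard : (e.card : ℝ) = (n:ℝ) - 1 := by
        rw [he_def, Finset.card_erase_of_mem hk_mem, Finset.card_univ, Fintype.card_fin,
          Nat.cast_sub (by omega : 1 ≤ n)]
        norm_num
      have hene : e.Nonempty := by
        rw [← Finset.card_pos]
        have : (0:ℝ) < (e.card : ℝ) := by rw [hecard]; linarith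
        exact_mod_cast this
      set s := ∑ j ∈ e, lam j with hs_def
      have hts : lam k + s = 1 := by
        rw [hs_def, he_def, Finset.add_sum_erase _ _ hk_mem, hsum]
      have hs0 : 0 < s := Finset.sum_pos (fun j _ => hpos j) hene
      have ht1 : lam k < 1 := by linarith
      have hs12 : s < 1/2 := by linarith
      have hjle : ∀ j ∈ e, lam j ≤ s :=
        fun j hj => Finset.single_le_sum (fun i _ => (hpos i).le) hj
      have hsplit : ∑ i, bcgPhi (lam i) = bcgPhi (lam k) + ∑ j ∈ e, bcgPhi (lam j) :=
        (Finset.add_sum_erase _ _ hk_mem).symm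
      have hB1 : ∑ j ∈ e, Real.log (lam j) ≤ ((n:ℝ)-1) * Real.log (s/((n:ℝ)-1)) := by
        have h := bcg_amgm e hene lam (fun j _ => hpos j)
        rwa [hecard, ← hs_def] at h
      have hB2 : ∑ j ∈ e, -Real.log (1 - lam j) ≤ -Real.log (1-s) := by
        calc ∑ j ∈ e, -Real.log (1 - lam j)
            ≤ ∑ j ∈ e, (lam j / s) * (-Real.log (1-s)) :=
              Finset.sum_le_sum (fun j hj =>
                bcg_chord hs0 (by linarith) (hpos j).le (hjle j hj))
          _ = ((∑ j ∈ e, lam j) / s) * (-Real.log (1-s)) := by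
              rw [← Finset.sum_mul, ← Finset.sum_div]
          _ = -Real.log (1-s) := by
              rw [← hs_def, div_self hs0.ne', one_mul]
      have hphie : ∑ j ∈ e, bcgPhi (lam j)
          ≤ ((n:ℝ)-1)/2 * Real.log (s/((n:ℝ)-1)) - Real.log (1-s) := by
        have hsumsplit : ∑ j ∈ e, bcgPhi (lam j)
            = (∑ j ∈ e, Real.log (lam j))/2 + ∑ j ∈ e, -Real.log (1 - lam j) := by
          simp only [bcgPhi, sub_eq_add_neg]
          rw [Finset.sum_add_distrib, Finset.sum_div]
        rw [hsumsplit]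
        linarith [hB1, hB2]
      have h1s : 1 - s = lam k := by linarith
      have hphik : bcgPhi (lam k) = Real.log (lam k) / 2 - Real.log s := by
        rw [bcgPhi]
        congr 2
        linarith
      have hsd : Real.log (s/((n:ℝ)-1)) = Real.log s - Real.log ((n:ℝ)-1) :=
        Real.log_div hs0.ne' hN1.ne'
      have hlt : -Real.log (lam k) ≤ Real.log 2 := by
        have h := Real.log_le_log (by norm_num : (0:ℝ) < 1/2) hk.le
        rw [show (1:ℝ)/2 = 2⁻¹ by norm_num, Real.log_inv] at h
        linarith
      have hls : Real.log s ≤ -Real.log 2 := by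
        have h := Real.log_le_log hs0 hs12.le
        rw [show (1:ℝ)/2 = 2⁻¹ by norm_num, Real.log_inv] at h
        linarith
      have hstar := bcg_star n h4'
      have coef : 0 ≤ ((n:ℝ)-3)/2 := by linarith
      rw [hsplit]
      rw [hsd, h1s] at hphie
      calc bcgPhi (lam k) + ∑ j ∈ e, bcgPhi (lam j)
          ≤ (Real.log (lam k)/2 - Real.log s)
            + (((n:ℝ)-1)/2 * (Real.log s - Real.log ((n:ℝ)-1)) - Real.log (lam k)) := by
            rw [hphik]
            exact add_le_add_right hphie _
        _ = -Real.log (lam k)/2 + ((n:ℝ)-3)/2 * Real.log s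
            - ((n:ℝ)-1)/2 * Real.log ((n:ℝ)-1) := by ring
        _ ≤ Real.log 2/2 + ((n:ℝ)-3)/2 * (-Real.log 2)
            - ((n:ℝ)-1)/2 * Real.log ((n:ℝ)-1) := by
            have h2 := mul_le_mul_of_nonneg_left hls coef
            linarith [hlt, h2]
        _ ≤ (n:ℝ)/2 * Real.log n - (n:ℝ) * Real.log ((n:ℝ)-1) := by linarith [hstar]



lemma bcg_trace_eq (A : Matrix (Fin n) (Fin n) ℝ) (hA : A.IsHermitian) :
    A.trace = ∑ i, hA.eigenvalues i := by
  nth_rewrite 1 [hA.spectral_theorem]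
  rw [Unitary.conjStarAlgAut_apply, Matrix.trace_mul_cycle]
  rw [show (star hA.eigenvectorUnitary : Matrix (Fin n) (Fin n) ℝ) *
      (hA.eigenvectorUnitary : Matrix (Fin n) (Fin n) ℝ) = 1 from
    Matrix.mem_unitaryGroup_iff'.mp hA.eigenvectorUnitary.2, one_mul,
    Matrix.trace_diagonal]
  simp [RCLike.ofReal_real_eq_id]

lemma bcg_one_sub_spectral (A : Matrix (Fin n) (Fin n) ℝ) (hA : A.IsHermitian) :
    1 - A = (hA.eigenvectorUnitary : Matrix (Fin n) (Fin n) ℝ)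
      * Matrix.diagonal (fun i => 1 - hA.eigenvalues i)
      * (star hA.eigenvectorUnitary : Matrix (Fin n) (Fin n) ℝ) := by
  have hU : (hA.eigenvectorUnitary : Matrix (Fin n) (Fin n) ℝ)
      * (star hA.eigenvectorUnitary : Matrix (Fin n) (Fin n) ℝ) = 1 :=
    Matrix.mem_unitaryGroup_iff.mp hA.eigenvectorUnitary.2
  have hdiag : Matrix.diagonal (fun i => 1 - hA.eigenvalues i)
      = 1 - Matrix.diagonal (RCLike.ofReal ∘ hA.eigenvalues) := by
    rw [← Matrix.diagonal_one, ← Matrix.diagonal_sub]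
    congr 1
  rw [hdiag, Matrix.mul_sub, Matrix.sub_mul, Matrix.mul_one, hU]
  conv_lhs => rw [hA.spectral_theorem, Unitary.conjStarAlgAut_apply]

lemma bcg_det_one_sub (A : Matrix (Fin n) (Fin n) ℝ) (hA : A.IsHermitian) :
    (1 - A).det = ∏ i, (1 - hA.eigenvalues i) := by
  rw [bcg_one_sub_spectral A hA, Matrix.det_mul, Matrix.det_mul, mul_comm, ← mul_assoc,
    ← Matrix.det_mul, show (star hA.eigenvectorUnitary : Matrix (Fin n) (Fin n) ℝ)
      * (hA.eigenvectorUnitary : Matrix (Fin n) (Fin n) ℝ) = 1 from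
      Matrix.mem_unitaryGroup_iff'.mp hA.eigenvectorUnitary.2, Matrix.det_one, one_mul,
    Matrix.det_diagonal]

lemma bcg_one_sub_psd (A : Matrix (Fin n) (Fin n) ℝ) (hA : A.IsHermitian)
    (h : ∀ i, hA.eigenvalues i ≤ 1) : (1 - A).PosSemidef := by
  rw [bcg_one_sub_spectral A hA]
  exact (Matrix.posSemidef_diagonal_iff.mpr (fun i => by linarith [h i])).mul_mul_conjTranspose_same _

lemma bcg_det_one_add_psd {M : Matrix (Fin n) (Fin n) ℝ} (hM : M.PosSemidef) :
    1 ≤ (1 + M).det := by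
  have hU : (hM.1.eigenvectorUnitary : Matrix (Fin n) (Fin n) ℝ)
      * (star hM.1.eigenvectorUnitary : Matrix (Fin n) (Fin n) ℝ) = 1 :=
    Matrix.mem_unitaryGroup_iff.mp hM.1.eigenvectorUnitary.2
  have hdecomp : 1 + M = (hM.1.eigenvectorUnitary : Matrix (Fin n) (Fin n) ℝ)
      * Matrix.diagonal (fun i => 1 + hM.1.eigenvalues i)
      * (star hM.1.eigenvectorUnitary : Matrix (Fin n) (Fin n) ℝ) := by
    have hdiag : Matrix.diagonal (fun i => 1 + hM.1.eigenvalues i)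
        = 1 + Matrix.diagonal (RCLike.ofReal ∘ hM.1.eigenvalues) := by
      rw [← Matrix.diagonal_one, ← Matrix.diagonal_add]
      congr 1
    rw [hdiag, Matrix.mul_add, Matrix.add_mul, Matrix.mul_one, hU]
    conv_lhs => rw [hM.1.spectral_theorem, Unitary.conjStarAlgAut_apply]
  rw [hdecomp, Matrix.det_mul, Matrix.det_mul, mul_comm, ← mul_assoc, ← Matrix.det_mul,
    show (star hM.1.eigenvectorUnitary : Matrix (Fin n) (Fin n) ℝ)
      * (hM.1.eigenvectorUnitary : Matrix (Fin n) (Fin n) ℝ) = 1 from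
      Matrix.mem_unitaryGroup_iff'.mp hM.1.eigenvectorUnitary.2, Matrix.det_one, one_mul,
    Matrix.det_diagonal]
  have h1 : (1:ℝ) = ∏ _i : Fin n, (1:ℝ) := by simp
  rw [h1]
  apply Finset.prod_le_prod
  · intro i _; norm_num
  · intro i _; linarith [hM.eigenvalues_nonneg i]

open scoped MatrixOrder in
lemma bcg_det_mono {B P : Matrix (Fin n) (Fin n) ℝ} (hB : B.PosSemidef) (hP : P.PosSemidef) :
    B.det ≤ (B + P).det := by
  have hBdet : 0 ≤ B.det := by
    rw [hB.1.det_eq_prod_eigenvalues]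
    exact Finset.prod_nonneg (fun i _ => by simpa using hB.eigenvalues_nonneg i)
  rcases eq_or_lt_of_le hBdet with h0 | h0
  · rw [← h0]
    have : (B + P).PosSemidef := hB.add hP
    rw [this.1.det_eq_prod_eigenvalues]
    exact Finset.prod_nonneg (fun i _ => by simpa using this.eigenvalues_nonneg i)
  · set C := CFC.sqrt B with hC_def
    have hC : C.PosSemidef := (CFC.sqrt_nonneg B).posSemidef
    have hCC : C * C = B := CFC.sqrt_mul_sqrt_self B (Matrix.nonneg_iff_posSemidef.mpr hB)
    have hCdet : C.det * C.det = B.det := by rw [← Matrix.det_mul, hCC]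
    have hCne : C.det ≠ 0 := by
      intro h
      rw [h, mul_zero] at hCdet
      exact h0.ne hCdet
    have hCunit : IsUnit C.det := isUnit_iff_ne_zero.mpr hCne
    have hCinv : C * C⁻¹ = 1 := Matrix.mul_nonsing_inv C hCunit
    have hCinv' : C⁻¹ * C = 1 := Matrix.nonsing_inv_mul C hCunit
    have hCherm : Cᴴ = C := hC.1
    have hCinvherm : (C⁻¹)ᴴ = C⁻¹ := by
      rw [Matrix.conjTranspose_nonsing_inv, hCherm]
    set M := C⁻¹ * P * C⁻¹ with hM_def
    have hM : M.PosSemidef := by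
      have := hP.mul_mul_conjTranspose_same C⁻¹
      rwa [hCinvherm] at this
    have hCPC : C * (C⁻¹ * P * C⁻¹) * C = P := by
      calc C * (C⁻¹ * P * C⁻¹) * C = (C * C⁻¹) * P * (C⁻¹ * C) := by
            simp only [Matrix.mul_assoc]
        _ = P := by rw [hCinv, hCinv', Matrix.one_mul, Matrix.mul_one]
    have hkey : B + P = C * (1 + M) * C := by
      rw [hM_def, Matrix.mul_add, Matrix.add_mul, Matrix.mul_one, hCC, hCPC]
    rw [hkey, Matrix.det_mul, Matrix.det_mul]
    have h1M := bcg_det_one_add_psd hM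
    have hCdet0 : 0 ≤ C.det := by
      rw [hC.1.det_eq_prod_eigenvalues]
      exact Finset.prod_nonneg (fun i _ => by simpa using hC.eigenvalues_nonneg i)
    have hfin := mul_le_mul_of_nonneg_left h1M (mul_nonneg hCdet0 hCdet0)
    nlinarith [hfin, hCdet]

end BCGaux

/-- Besson–Courtois–Gallot determinant inequality: if `H`, `K` are `n × n`
real symmetric matrices with `n ≥ 3`, `K` positive definite, `H` positive
semidefinite, `H + K ≥ I` (i.e. `H + K - 1` positive semidefinite) and
`trace H = 1`, then `√(det H) / det K ≤ n^(n/2) / (n-1)^n`. -/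
theorem bcg_determinant_inequality (n : ℕ) (hn : 3 ≤ n)
    (H K : Matrix (Fin n) (Fin n) ℝ)
    (hH : H.PosSemidef) (hK : K.PosDef)
    (hHK : (H + K - 1).PosSemidef)
    (htr : H.trace = 1) :
    Real.sqrt H.det / K.det ≤ (n : ℝ) ^ ((n : ℝ) / 2) / ((n : ℝ) - 1) ^ n := by
  have hN3 : (3:ℝ) ≤ (n:ℝ) := by exact_mod_cast hn
  have hN0 : (0:ℝ) < (n:ℝ) := by linarith
  have hN1 : (0:ℝ) < (n:ℝ) - 1 := by linarith
  have hrhs0 : 0 ≤ (n : ℝ) ^ ((n : ℝ) / 2) / ((n : ℝ) - 1) ^ n := by positivity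
  set lam : Fin n → ℝ := hH.1.eigenvalues with hlam_def
  have hlam0 : ∀ i, 0 ≤ lam i := fun i => hH.eigenvalues_nonneg i
  have hsumlam : ∑ i, lam i = 1 := by
    rw [hlam_def, ← bcg_trace_eq H hH.1, htr]
  have hdetH : H.det = ∏ i, lam i := by
    have h := hH.1.det_eq_prod_eigenvalues
    simpa [hlam_def] using h
  by_cases hz : ∃ i, lam i = 0
  · obtain ⟨i, hi⟩ := hz
    have : H.det = 0 := by
      rw [hdetH]
      exact Finset.prod_eq_zero (Finset.mem_univ i) hi
    rw [this, Real.sqrt_zero, zero_div]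
    exact hrhs0
  · push_neg at hz
    have hpos : ∀ i, 0 < lam i := fun i => lt_of_le_of_ne (hlam0 i) (Ne.symm (hz i))
    have hlt1 : ∀ i, lam i < 1 := by
      intro i
      have hsplit : lam i + ∑ j ∈ Finset.univ.erase i, lam j = 1 := by
        rw [Finset.add_sum_erase _ _ (Finset.mem_univ i), hsumlam]
      have hene : (Finset.univ.erase i).Nonempty := by
        rw [← Finset.card_pos, Finset.card_erase_of_mem (Finset.mem_univ i),
          Finset.card_univ, Fintype.card_fin]
        omega
      have := Finset.sum_pos (fun j _ => hpos j) hene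
      linarith
    have hdetHpos : 0 < H.det := by
      rw [hdetH]; exact Finset.prod_pos (fun i _ => hpos i)
    have hdet1H : (1 - H).det = ∏ i, (1 - lam i) := bcg_det_one_sub H hH.1
    have hdet1Hpos : 0 < (1 - H).det := by
      rw [hdet1H]; exact Finset.prod_pos (fun i _ => by linarith [hlt1 i])
    have hdetmono : (1 - H).det ≤ K.det := by
      have h := bcg_det_mono (bcg_one_sub_psd H hH.1 (fun i => (hlt1 i).le)) hHK
      rwa [show (1 - H) + (H + K - 1) = K by abel] at h
    have step1 : Real.sqrt H.det / K.det ≤ Real.sqrt H.det / (1 - H).det :=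
      div_le_div_of_nonneg_left (Real.sqrt_nonneg _) hdet1Hpos hdetmono
    have step2 : Real.sqrt H.det / (1 - H).det = Real.exp (∑ i, bcgPhi (lam i)) := by
      have hsqrt : Real.sqrt H.det = Real.exp (Real.log H.det / 2) := by
        rw [Real.sqrt_eq_rpow, Real.rpow_def_of_pos hdetHpos]
        ring_nf
      have hden : (1 - H).det = Real.exp (Real.log ((1 - H).det)) :=
        (Real.exp_log hdet1Hpos).symm
      rw [hsqrt]
      nth_rewrite 1 [hden]
      rw [← Real.exp_sub]
      congr 1
      rw [hdetH, hdet1H, Real.log_prod (fun i _ => (hpos i).ne'),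
        Real.log_prod (fun i _ => (by linarith [hlt1 i] : 1 - lam i ≠ 0))]
      simp only [bcgPhi]
      rw [Finset.sum_sub_distrib, Finset.sum_div]
    have step3 : Real.exp (∑ i, bcgPhi (lam i))
        ≤ (n : ℝ) ^ ((n : ℝ) / 2) / ((n : ℝ) - 1) ^ n := by
      have e1 : (n:ℝ) ^ ((n:ℝ)/2) = Real.exp ((n:ℝ)/2 * Real.log n) := by
        rw [Real.rpow_def_of_pos hN0]; ring_nf
      have e2 : ((n:ℝ)-1) ^ n = Real.exp ((n:ℝ) * Real.log ((n:ℝ)-1)) := by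
        rw [← Real.rpow_natCast ((n:ℝ)-1) n, Real.rpow_def_of_pos hN1]; ring_nf
      rw [e1, e2, ← Real.exp_sub]
      exact Real.exp_le_exp.mpr (bcg_key n hn lam hpos hsumlam)
    calc Real.sqrt H.det / K.det ≤ Real.sqrt H.det / (1 - H).det := step1
      _ = Real.exp (∑ i, bcgPhi (lam i)) := step2
      _ ≤ _ := step3
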